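/- Any bounded plane set of diameter 1 is contained in some hexagon all of whose angles are 120° and whose opposite sides are parallel at distance 1 (with one side's direction chosen arbitrarily). -/

import Mathlib

open EuclideanGeometry Affine Metric
open scoped InnerProductSpace

section helpers


variable {V : Type*} [NormedAddCommGroup V] [InnerProductSpace ℝ V]

lemma aux_sum_lt
    (K : Set V) (hK : ∀ x ∈ K, ∀ y ∈ K, dist x y ≤ 1)
    (n₁ n₂ n₃ : V) (h1 : ‖n₁‖ = 1) (h2 : ‖n₂‖ = 1) (h12 : ⟪n₁, n₂⟫_ℝ = -(1/2))
    (hsum : n₁ + n₂ + n₃ = 0)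
    {x₁ x₂ x₃ : V} (hx₁ : x₁ ∈ K) (hx₂ : x₂ ∈ K) (hx₃ : x₃ ∈ K) :
    ⟪x₁, n₁⟫_ℝ + ⟪x₂, n₂⟫_ℝ + ⟪x₃, n₃⟫_ℝ < 2 := by
  have hn₃ : n₃ = -n₁ - n₂ := by
    have h := hsum
    have : n₃ = -(n₁ + n₂) := by
      rw [← sub_eq_zero]; rw [show n₃ - -(n₁+n₂) = n₁ + n₂ + n₃ by abel, h]
    rw [this]; abel
  by_contra hcon
  push_neg at hcon
  have e3 : ⟪x₃, n₃⟫_ℝ = -⟪x₃, n₁⟫_ℝ - ⟪x₃, n₂⟫_ℝ := by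
    rw [hn₃, inner_sub_right, inner_neg_right]
  set d₁ := x₁ - x₃ with hd₁
  set d₂ := x₂ - x₃ with hd₂
  have i1 : ⟪x₁, n₁⟫_ℝ - ⟪x₃, n₁⟫_ℝ = ⟪d₁, n₁⟫_ℝ := by rw [hd₁, inner_sub_left]
  have i2 : ⟪x₂, n₂⟫_ℝ - ⟪x₃, n₂⟫_ℝ = ⟪d₂, n₂⟫_ℝ := by rw [hd₂, inner_sub_left]
  have nd₁ : ‖d₁‖ ≤ 1 := by
    have := hK x₁ hx₁ x₃ hx₃; rwa [dist_eq_norm] at this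
  have nd₂ : ‖d₂‖ ≤ 1 := by
    have := hK x₂ hx₂ x₃ hx₃; rwa [dist_eq_norm] at this
  have c₁ : ⟪d₁, n₁⟫_ℝ ≤ ‖d₁‖ := by
    have := real_inner_le_norm d₁ n₁; rwa [h1, mul_one] at this
  have c₂ : ⟪d₂, n₂⟫_ℝ ≤ ‖d₂‖ := by
    have := real_inner_le_norm d₂ n₂; rwa [h2, mul_one] at this
  have e₁ : ⟪d₁, n₁⟫_ℝ = 1 ∧ ‖d₁‖ = 1 := by constructor <;> linarith
  have e₂ : ⟪d₂, n₂⟫_ℝ = 1 ∧ ‖d₂‖ = 1 := by constructor <;> linarith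
  have hd₁n : d₁ = n₁ := by
    have h := (inner_eq_norm_mul_iff_real (x := d₁) (y := n₁)).1
      (by rw [e₁.2, h1]; simpa using e₁.1)
    rw [h1, e₁.2, one_smul, one_smul] at h; exact h
  have hd₂n : d₂ = n₂ := by
    have h := (inner_eq_norm_mul_iff_real (x := d₂) (y := n₂)).1
      (by rw [e₂.2, h2]; simpa using e₂.1)
    rw [h2, e₂.2, one_smul, one_smul] at h; exact h
  have hdist : dist x₁ x₂ ≤ 1 := hK x₁ hx₁ x₂ hx₂
  have hx12 : x₁ - x₂ = n₁ - n₂ := by rw [← hd₁n, ← hd₂n, hd₁, hd₂]; abel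
  have : ‖x₁ - x₂‖ ^ 2 = 3 := by
    rw [hx12, norm_sub_sq_real, h1, h2, h12]; norm_num
  rw [dist_eq_norm] at hdist
  nlinarith [norm_nonneg (x₁ - x₂)]

lemma ang_aux (p q : V) (hp : ⟪p, p⟫_ℝ = 4/3) (hq : ⟪q, q⟫_ℝ = 4/3)
    (hpq : ⟪p, q⟫_ℝ = -(2/3)) :
    InnerProductGeometry.angle p q = 2 * Real.pi / 3 := by
  rw [InnerProductGeometry.angle, norm_eq_sqrt_real_inner, norm_eq_sqrt_real_inner, hp, hq, hpq]
  rw [Real.mul_self_sqrt (by norm_num)]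
  rw [show (-(2/3) : ℝ) / (4/3) = -(1/2) by norm_num]
  rw [Real.arccos_neg, show (1/2 : ℝ) = Real.cos (Real.pi/3) by rw [Real.cos_pi_div_three],
    Real.arccos_cos (by positivity) (by linarith [Real.pi_pos])]
  ring

lemma par_aux (p q p' q' d : V) (c c' : ℝ) (hc : c ≠ 0) (hc' : c' ≠ 0)
    (h : q - p = c • d) (h' : q' - p' = c' • d) :
    line[ℝ, p, q] ∥ line[ℝ, p', q'] := by
  rw [AffineSubspace.affineSpan_pair_parallel_iff_vectorSpan_eq, vectorSpan_pair,
    vectorSpan_pair]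
  have e1 : p -ᵥ q = (-c) • d := by rw [vsub_eq_sub, neg_smul, ← h]; abel
  have e2 : p' -ᵥ q' = (-c') • d := by rw [vsub_eq_sub, neg_smul, ← h']; abel
  rw [e1, e2, Submodule.span_singleton_smul_eq (IsUnit.mk0 _ (neg_ne_zero.2 hc)) d,
    Submodule.span_singleton_smul_eq (IsUnit.mk0 _ (neg_ne_zero.2 hc')) d]

lemma infDist_line_aux (X P₁ P₂ nrm : V) (hn : ‖nrm‖ = 1)
    (h1 : ⟪X - P₁, nrm⟫_ℝ = 1 ∨ ⟪X - P₁, nrm⟫_ℝ = -1)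
    (h2 : ⟪P₂ - P₁, nrm⟫_ℝ = 0)
    (z : V) (hz : z ∈ line[ℝ, P₁, P₂]) (hdz : dist X z = 1) :
    Metric.infDist X (line[ℝ, P₁, P₂] : Set V) = 1 := by
  apply le_antisymm
  · calc Metric.infDist X (line[ℝ, P₁, P₂] : Set V) ≤ dist X z :=
          Metric.infDist_le_dist_of_mem hz
      _ = 1 := hdz
  · have hne : Nonempty (line[ℝ, P₁, P₂] : Set V) :=
      ⟨⟨P₁, left_mem_affineSpan_pair ℝ _ _⟩⟩
    rw [Metric.infDist_eq_iInf]
    apply le_ciInf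
    rintro ⟨y, hy⟩
    obtain ⟨ρ, hρ⟩ : ∃ ρ : ℝ, ρ • (P₂ -ᵥ P₁) = y -ᵥ P₁ :=
      (vadd_left_mem_affineSpan_pair (k := ℝ)).1 (by rwa [vsub_vadd])
    have hXy : X - y = (X - P₁) - ρ • (P₂ - P₁) := by
      rw [← vsub_eq_sub P₂ P₁, hρ, vsub_eq_sub]; abel
    have key : ⟪X - y, nrm⟫_ℝ = ⟪X - P₁, nrm⟫_ℝ - ρ * ⟪P₂ - P₁, nrm⟫_ℝ := by
      rw [hXy, inner_sub_left, real_inner_smul_left]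
    have habs : |⟪X - y, nrm⟫_ℝ| = 1 := by
      rcases h1 with h | h <;> rw [key, h2, h] <;> norm_num
    calc (1 : ℝ) = |⟪X - y, nrm⟫_ℝ| := habs.symm
      _ ≤ ‖X - y‖ * ‖nrm‖ := abs_real_inner_le_norm _ _
      _ = dist X y := by rw [hn, mul_one, dist_eq_norm]

end helpers

set_option maxHeartbeats 1000000

theorem stmt7 (Φ : Set (EuclideanSpace ℝ (Fin 2))) (hbdd : Bornology.IsBounded Φ)
    (hdiam : Metric.diam Φ = 1) (v : EuclideanSpace ℝ (Fin 2)) (hv : v ≠ 0) :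
    ∃ A B C D E F : EuclideanSpace ℝ (Fin 2),
      (∠ F A B = 2 * Real.pi / 3 ∧ ∠ A B C = 2 * Real.pi / 3 ∧
       ∠ B C D = 2 * Real.pi / 3 ∧ ∠ C D E = 2 * Real.pi / 3 ∧
       ∠ D E F = 2 * Real.pi / 3 ∧ ∠ E F A = 2 * Real.pi / 3) ∧
      (line[ℝ, A, B] ∥ line[ℝ, D, E] ∧ line[ℝ, B, C] ∥ line[ℝ, E, F] ∧
       line[ℝ, C, D] ∥ line[ℝ, F, A]) ∧
      (Metric.infDist A (line[ℝ, D, E] : Set (EuclideanSpace ℝ (Fin 2))) = 1 ∧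
       Metric.infDist B (line[ℝ, E, F] : Set (EuclideanSpace ℝ (Fin 2))) = 1 ∧
       Metric.infDist C (line[ℝ, F, A] : Set (EuclideanSpace ℝ (Fin 2))) = 1) ∧
      (∃ t : ℝ, B - A = t • v) ∧
      Φ ⊆ convexHull ℝ {A, B, C, D, E, F} := by
  -- basic setup
  have hΦne : Φ.Nonempty := by
    rcases Φ.eq_empty_or_nonempty with h | h
    · exfalso; rw [h, Metric.diam_empty] at hdiam; norm_num at hdiam
    · exact h
  set K := closure Φ with hK_def
  have hKc : IsCompact K := hbdd.isCompact_closure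
  have hKne : K.Nonempty := hΦne.closure
  have hKd : ∀ x ∈ K, ∀ y ∈ K, dist x y ≤ 1 := by
    intro x hx y hy
    have := Metric.dist_le_diam_of_mem hbdd.closure hx hy
    rwa [Metric.diam_closure, hdiam] at this
  -- coordinate frame
  obtain ⟨r, hr3, hr0, hrne, hrr⟩ : ∃ r : ℝ, r ^ 2 = 3 ∧ 0 < r ∧ r ≠ 0 ∧ r * r = 3 := by
    have hs3 : Real.sqrt 3 ^ 2 = 3 := Real.sq_sqrt (by norm_num)
    have hp3 : 0 < Real.sqrt 3 := Real.sqrt_pos.2 (by norm_num)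
    exact ⟨Real.sqrt 3, hs3, hp3, ne_of_gt hp3,
      by rw [show Real.sqrt 3 * Real.sqrt 3 = Real.sqrt 3 ^ 2 by ring, hs3]⟩
  obtain ⟨u, w, hu_def, huu, hww, huw, hwu, hexp0⟩ :
      ∃ u w : EuclideanSpace ℝ (Fin 2), u = (‖v‖⁻¹ : ℝ) • v ∧ ⟪u, u⟫_ℝ = 1 ∧ ⟪w, w⟫_ℝ = 1 ∧
        ⟪u, w⟫_ℝ = 0 ∧ ⟪w, u⟫_ℝ = 0 ∧
        ∀ p : EuclideanSpace ℝ (Fin 2), p = ⟪p, u⟫_ℝ • u + ⟪p, w⟫_ℝ • w := by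
    set u : EuclideanSpace ℝ (Fin 2) := (‖v‖⁻¹ : ℝ) • v with hu_def
    have hu : ‖u‖ = 1 := norm_smul_inv_norm (𝕜 := ℝ) hv
    set w : EuclideanSpace ℝ (Fin 2) :=
      (WithLp.equiv 2 (Fin 2 → ℝ)).symm ![-(u 1), u 0] with hw_def
    have hw0 : w 0 = -(u 1) := by rw [hw_def]; simp
    have hw1 : w 1 = u 0 := by rw [hw_def]; simp
    have huu : ⟪u, u⟫_ℝ = 1 := by
      rw [real_inner_self_eq_norm_mul_norm, hu]; norm_num
    have hu2 : u 0 * u 0 + u 1 * u 1 = 1 := by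
      have h := huu
      simp only [PiLp.inner_apply, RCLike.inner_apply, Fin.sum_univ_two, conj_trivial] at h
      linarith
    have hww : ⟪w, w⟫_ℝ = 1 := by
      simp only [PiLp.inner_apply, RCLike.inner_apply, Fin.sum_univ_two, conj_trivial, hw0, hw1]
      linear_combination hu2
    have huw : ⟪u, w⟫_ℝ = 0 := by
      simp only [PiLp.inner_apply, RCLike.inner_apply, Fin.sum_univ_two, conj_trivial, hw0, hw1]
      ring
    have hwu : ⟪w, u⟫_ℝ = 0 := by rw [real_inner_comm]; exact huw
    refine ⟨u, w, rfl, huu, hww, huw, hwu, ?_⟩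
    intro p
    ext i
    fin_cases i <;>
      simp [PiLp.inner_apply, RCLike.inner_apply, Fin.sum_univ_two, hw0, hw1] <;>
      [(linear_combination (-(p 0)) * hu2); (linear_combination (-(p 1)) * hu2)]
  -- the Q parametrization
  obtain ⟨Q, hQ⟩ : ∃ Q : ℝ → ℝ → EuclideanSpace ℝ (Fin 2),
      ∀ x y, Q x y = (x / r) • u + y • w := ⟨_, fun _ _ => rfl⟩
  have subQ : ∀ x y x' y', Q x y - Q x' y' = Q (x - x') (y - y') := by
    intros; simp only [hQ]; module
  have addQ : ∀ x y x' y', Q x y + Q x' y' = Q (x + x') (y + y') := by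
    intros; simp only [hQ]; module
  have smulQ : ∀ (c x y : ℝ), c • Q x y = Q (c * x) (c * y) := by
    intros; simp only [hQ]; module
  have innQ : ∀ x y x' y', ⟪Q x y, Q x' y'⟫_ℝ = x * x' / 3 + y * y' := by
    intro x y x' y'
    simp only [hQ, inner_add_left, inner_add_right, real_inner_smul_left,
      real_inner_smul_right, huu, hww, huw, hwu, mul_one, mul_zero, add_zero, zero_add]
    rw [div_mul_div_comm, hrr]; ring
  have hnormQ : ∀ x y, ‖Q x y‖ = Real.sqrt (x * x / 3 + y * y) := by
    intro x y; rw [norm_eq_sqrt_real_inner, innQ]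
  have hdistQ : ∀ x y x' y' : ℝ, (x - x') * (x - x') / 3 + (y - y') * (y - y') = 1 →
      dist (Q x y) (Q x' y') = 1 := by
    intro x y x' y' h
    rw [dist_eq_norm, subQ, hnormQ, h, Real.sqrt_one]
  -- normals
  obtain ⟨n₁, hn₁d⟩ : ∃ n, n = Q 0 1 := ⟨_, rfl⟩
  obtain ⟨n₂, hn₂d⟩ : ∃ n, n = Q (-(3/2)) (-(1/2)) := ⟨_, rfl⟩
  obtain ⟨n₃, hn₃d⟩ : ∃ n, n = Q (3/2) (-(1/2)) := ⟨_, rfl⟩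
  have hnorm_of : ∀ n : EuclideanSpace ℝ (Fin 2), ⟪n, n⟫_ℝ = 1 → ‖n‖ = 1 := by
    intro n h
    have h2 : ‖n‖ * ‖n‖ = 1 := by rw [← real_inner_self_eq_norm_mul_norm, h]
    rcases mul_self_eq_one_iff.1 h2 with h' | h'
    · exact h'
    · nlinarith [norm_nonneg n]
  have hn₁ : ‖n₁‖ = 1 := hnorm_of _ (by rw [hn₁d, innQ]; norm_num)
  have hn₂ : ‖n₂‖ = 1 := hnorm_of _ (by rw [hn₂d, innQ]; norm_num)
  have hn₃ : ‖n₃‖ = 1 := hnorm_of _ (by rw [hn₃d, innQ]; norm_num)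
  have h12 : ⟪n₁, n₂⟫_ℝ = -(1/2) := by rw [hn₁d, hn₂d, innQ]; norm_num
  have h12n : ⟪-n₁, -n₂⟫_ℝ = -(1/2) := by rw [inner_neg_neg]; exact h12
  have hsum : n₁ + n₂ + n₃ = 0 := by
    rw [hn₁d, hn₂d, hn₃d, hQ, hQ, hQ]; module
  have hsumn : -n₁ + -n₂ + -n₃ = 0 := by
    rw [show -n₁ + -n₂ + -n₃ = -(n₁ + n₂ + n₃) by abel, hsum, neg_zero]
  -- extreme points
  have hcont : ∀ n : EuclideanSpace ℝ (Fin 2), Continuous fun p : EuclideanSpace ℝ (Fin 2) => ⟪p, n⟫_ℝ :=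
    fun n => continuous_id.inner continuous_const
  obtain ⟨x₁, hx₁K, hx₁max⟩ := hKc.exists_isMaxOn hKne ((hcont n₁).continuousOn)
  obtain ⟨x₂, hx₂K, hx₂max⟩ := hKc.exists_isMaxOn hKne ((hcont n₂).continuousOn)
  obtain ⟨x₃, hx₃K, hx₃max⟩ := hKc.exists_isMaxOn hKne ((hcont n₃).continuousOn)
  obtain ⟨y₁, hy₁K, hy₁max⟩ := hKc.exists_isMaxOn hKne ((hcont (-n₁)).continuousOn)
  obtain ⟨y₂, hy₂K, hy₂max⟩ := hKc.exists_isMaxOn hKne ((hcont (-n₂)).continuousOn)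
  obtain ⟨y₃, hy₃K, hy₃max⟩ := hKc.exists_isMaxOn hKne ((hcont (-n₃)).continuousOn)
  set M₁ := ⟪x₁, n₁⟫_ℝ with hM₁d
  set M₂ := ⟪x₂, n₂⟫_ℝ with hM₂d
  set M₃ := ⟪x₃, n₃⟫_ℝ with hM₃d
  set m₁ := ⟪y₁, n₁⟫_ℝ with hm₁d
  set m₂ := ⟪y₂, n₂⟫_ℝ with hm₂d
  set m₃ := ⟪y₃, n₃⟫_ℝ with hm₃d
  -- bounds on Φ
  have hub : ∀ p ∈ Φ, ⟪p, n₁⟫_ℝ ≤ M₁ ∧ ⟪p, n₂⟫_ℝ ≤ M₂ ∧ ⟪p, n₃⟫_ℝ ≤ M₃ := by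
    intro p hp
    have hpK : p ∈ K := subset_closure hp
    exact ⟨isMaxOn_iff.1 hx₁max p hpK, isMaxOn_iff.1 hx₂max p hpK, isMaxOn_iff.1 hx₃max p hpK⟩
  have hlb : ∀ p ∈ Φ, m₁ ≤ ⟪p, n₁⟫_ℝ ∧ m₂ ≤ ⟪p, n₂⟫_ℝ ∧ m₃ ≤ ⟪p, n₃⟫_ℝ := by
    intro p hp
    have hpK : p ∈ K := subset_closure hp
    have h1 := isMaxOn_iff.1 hy₁max p hpK
    have h2 := isMaxOn_iff.1 hy₂max p hpK
    have h3 := isMaxOn_iff.1 hy₃max p hpK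
    simp only [inner_neg_right] at h1 h2 h3
    exact ⟨by rw [hm₁d]; linarith, by rw [hm₂d]; linarith, by rw [hm₃d]; linarith⟩
  -- widths
  have hwid : ∀ (a b n : EuclideanSpace ℝ (Fin 2)), a ∈ K → b ∈ K → ‖n‖ = 1 →
      ⟪a, n⟫_ℝ - ⟪b, n⟫_ℝ ≤ 1 := by
    intro a b n ha hb hn
    have h1 : ⟪a, n⟫_ℝ - ⟪b, n⟫_ℝ = ⟪a - b, n⟫_ℝ := (inner_sub_left _ _ _).symm
    have h2 := real_inner_le_norm (a - b) n
    have h3 := hKd a ha b hb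
    rw [dist_eq_norm] at h3
    rw [hn, mul_one] at h2
    linarith
  have hw₁ : M₁ ≤ m₁ + 1 := by have := hwid x₁ y₁ n₁ hx₁K hy₁K hn₁; linarith
  have hw₂ : M₂ ≤ m₂ + 1 := by have := hwid x₂ y₂ n₂ hx₂K hy₂K hn₂; linarith
  have hw₃ : M₃ ≤ m₃ + 1 := by have := hwid x₃ y₃ n₃ hx₃K hy₃K hn₃; linarith
  -- strict sum bounds
  have hM : M₁ + M₂ + M₃ < 2 :=
    aux_sum_lt K hKd n₁ n₂ n₃ hn₁ hn₂ h12 hsum hx₁K hx₂K hx₃K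
  have hm : -(m₁ + m₂ + m₃) < 2 := by
    have := aux_sum_lt K hKd (-n₁) (-n₂) (-n₃) (by rw [norm_neg]; exact hn₁)
      (by rw [norm_neg]; exact hn₂) h12n hsumn hy₁K hy₂K hy₃K
    simp only [inner_neg_right] at this
    linarith
  -- choice of strip positions
  obtain ⟨t₁, t₂, t₃, hMt₁, hmt₁, hMt₂, hmt₂, hMt₃, hmt₃, hs1, hs2⟩ :
      ∃ t₁ t₂ t₃ : ℝ, M₁ ≤ t₁ + 1/2 ∧ t₁ - 1/2 ≤ m₁ ∧ M₂ ≤ t₂ + 1/2 ∧ t₂ - 1/2 ≤ m₂ ∧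
        M₃ ≤ t₃ + 1/2 ∧ t₃ - 1/2 ≤ m₃ ∧ t₁ + t₂ + t₃ < 1/2 ∧ -(1/2) < t₁ + t₂ + t₃ := by
    set L := M₁ + M₂ + M₃ - 3/2 with hL_def
    set U := m₁ + m₂ + m₃ + 3/2 with hU_def
    have hLU : L ≤ U := by rw [hL_def, hU_def]; linarith
    have hLlt : L < 1/2 := by rw [hL_def]; linarith
    have hUgt : -(1/2) < U := by rw [hU_def]; linarith
    set τ := max L (min 0 U) with hτ_def
    have hτL : L ≤ τ := le_max_left _ _
    have hτU : τ ≤ U := max_le hLU (le_trans (min_le_right 0 U) le_rfl)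
    have hτ1 : τ < 1/2 := max_lt hLlt (lt_of_le_of_lt (min_le_left 0 U) one_half_pos)
    have hτ2 : -(1/2) < τ :=
      lt_of_lt_of_le (lt_min (by norm_num) hUgt) (le_max_right _ _)
    set lam := (τ - L) / (U - L) with hlam_def
    have hlam0 : 0 ≤ lam := div_nonneg (by linarith) (by linarith)
    have hlam1 : lam ≤ 1 := div_le_one_of_le₀ (by linarith) (by linarith)
    refine ⟨M₁ - 1/2 + lam * (m₁ + 1 - M₁), M₂ - 1/2 + lam * (m₂ + 1 - M₂),
      M₃ - 1/2 + lam * (m₃ + 1 - M₃), ?_, ?_, ?_, ?_, ?_, ?_, ?_, ?_⟩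
    · linarith [mul_nonneg hlam0 (show (0:ℝ) ≤ m₁ + 1 - M₁ by linarith)]
    · have hfact : (1 - lam) * (m₁ + 1 - M₁) = (m₁ + 1 - M₁) - lam * (m₁ + 1 - M₁) := by ring
      linarith [mul_nonneg (show (0:ℝ) ≤ 1 - lam by linarith)
        (show (0:ℝ) ≤ m₁ + 1 - M₁ by linarith), hfact]
    · linarith [mul_nonneg hlam0 (show (0:ℝ) ≤ m₂ + 1 - M₂ by linarith)]
    · have hfact : (1 - lam) * (m₂ + 1 - M₂) = (m₂ + 1 - M₂) - lam * (m₂ + 1 - M₂) := by ring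
      linarith [mul_nonneg (show (0:ℝ) ≤ 1 - lam by linarith)
        (show (0:ℝ) ≤ m₂ + 1 - M₂ by linarith), hfact]
    · linarith [mul_nonneg hlam0 (show (0:ℝ) ≤ m₃ + 1 - M₃ by linarith)]
    · have hfact : (1 - lam) * (m₃ + 1 - M₃) = (m₃ + 1 - M₃) - lam * (m₃ + 1 - M₃) := by ring
      linarith [mul_nonneg (show (0:ℝ) ≤ 1 - lam by linarith)
        (show (0:ℝ) ≤ m₃ + 1 - M₃ by linarith), hfact]
    · have hst : M₁ - 1/2 + lam * (m₁ + 1 - M₁) + (M₂ - 1/2 + lam * (m₂ + 1 - M₂))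
          + (M₃ - 1/2 + lam * (m₃ + 1 - M₃)) = L + lam * (U - L) := by
        rw [hL_def, hU_def]; ring
      rw [hst]
      rcases eq_or_lt_of_le hLU with h | h
      · rw [← h]
        have heq : L + lam * (L - L) = L := by ring
        rw [heq]; linarith
      · have he : lam * (U - L) = τ - L := by
          rw [hlam_def, div_mul_cancel₀]; linarith
        rw [he]; linarith
    · have hst : M₁ - 1/2 + lam * (m₁ + 1 - M₁) + (M₂ - 1/2 + lam * (m₂ + 1 - M₂))
          + (M₃ - 1/2 + lam * (m₃ + 1 - M₃)) = L + lam * (U - L) := by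
        rw [hL_def, hU_def]; ring
      rw [hst]
      rcases eq_or_lt_of_le hLU with h | h
      · rw [← h]
        have heq : L + lam * (L - L) = L := by ring
        rw [heq]
        calc -(1/2) < τ := hτ2
          _ ≤ U := hτU
          _ = L := h.symm
      · have he : lam * (U - L) = τ - L := by
          rw [hlam_def, div_mul_cancel₀]; linarith
        rw [he]; linarith
  have hα : 0 < t₁ + t₂ + t₃ + 1/2 := by linarith
  have hβ : 0 < 1/2 - (t₁ + t₂ + t₃) := by linarith
  -- the six vertices
  obtain ⟨A, hAd⟩ : ∃ A, A = Q (-(2*t₂+t₁+1/2)) (t₁-1/2) := ⟨_, rfl⟩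
  obtain ⟨B, hBd⟩ : ∃ B, B = Q (2*t₃+t₁+1/2) (t₁-1/2) := ⟨_, rfl⟩
  obtain ⟨C, hCd⟩ : ∃ C, C = Q (t₃-t₂+1) (-(t₂+t₃)) := ⟨_, rfl⟩
  obtain ⟨D, hDd⟩ : ∃ D, D = Q (-(2*t₂+t₁-1/2)) (t₁+1/2) := ⟨_, rfl⟩
  obtain ⟨E, hEd⟩ : ∃ E, E = Q (2*t₃+t₁-1/2) (t₁+1/2) := ⟨_, rfl⟩
  obtain ⟨F, hFd⟩ : ∃ F, F = Q (t₃-t₂-1) (-(t₂+t₃)) := ⟨_, rfl⟩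
  have hβne : (1/2 - (t₁+t₂+t₃)) ≠ 0 := ne_of_gt hβ
  have hαne : (t₁+t₂+t₃+1/2) ≠ 0 := ne_of_gt hα
  -- side vectors
  have hFA : F - A = (1/2 - (t₁+t₂+t₃)) • Q (-1) 1 := by
    rw [hFd, hAd]; simp only [hQ]; module
  have hBA : B - A = (t₁+t₂+t₃+1/2) • Q 2 0 := by
    rw [hBd, hAd]; simp only [hQ]; module
  have hAB : A - B = (t₁+t₂+t₃+1/2) • Q (-2) 0 := by
    rw [hBd, hAd]; simp only [hQ]; module
  have hCB : C - B = (1/2 - (t₁+t₂+t₃)) • Q 1 1 := by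
    rw [hCd, hBd]; simp only [hQ]; module
  have hBC : B - C = (1/2 - (t₁+t₂+t₃)) • Q (-1) (-1) := by
    rw [hCd, hBd]; simp only [hQ]; module
  have hDC : D - C = (t₁+t₂+t₃+1/2) • Q (-1) 1 := by
    rw [hDd, hCd]; simp only [hQ]; module
  have hCD : C - D = (t₁+t₂+t₃+1/2) • Q 1 (-1) := by
    rw [hDd, hCd]; simp only [hQ]; module
  have hED : E - D = (1/2 - (t₁+t₂+t₃)) • Q (-2) 0 := by
    rw [hEd, hDd]; simp only [hQ]; module
  have hDE : D - E = (1/2 - (t₁+t₂+t₃)) • Q 2 0 := by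
    rw [hEd, hDd]; simp only [hQ]; module
  have hFE : F - E = (t₁+t₂+t₃+1/2) • Q (-1) (-1) := by
    rw [hFd, hEd]; simp only [hQ]; module
  have hEF : E - F = (t₁+t₂+t₃+1/2) • Q 1 1 := by
    rw [hFd, hEd]; simp only [hQ]; module
  have hAF : A - F = (1/2 - (t₁+t₂+t₃)) • Q 1 (-1) := by
    rw [hFd, hAd]; simp only [hQ]; module
  have hEDneg : E - D = (-(1/2 - (t₁+t₂+t₃))) • Q 2 0 := by
    rw [hEd, hDd]; simp only [hQ]; module
  have hFEneg : F - E = (-(t₁+t₂+t₃+1/2)) • Q 1 1 := by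
    rw [hFd, hEd]; simp only [hQ]; module
  have hAFneg : A - F = (-(1/2 - (t₁+t₂+t₃))) • Q (-1) 1 := by
    rw [hFd, hAd]; simp only [hQ]; module
  refine ⟨A, B, C, D, E, F, ⟨?_, ?_, ?_, ?_, ?_, ?_⟩, ⟨?_, ?_, ?_⟩, ⟨?_, ?_, ?_⟩, ?_, ?_⟩
  -- angles
  · show InnerProductGeometry.angle (F -ᵥ A) (B -ᵥ A) = 2 * Real.pi / 3
    rw [vsub_eq_sub, vsub_eq_sub, hFA, hBA,
      InnerProductGeometry.angle_smul_left_of_pos _ _ hβ,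
      InnerProductGeometry.angle_smul_right_of_pos _ _ hα]
    exact ang_aux _ _ (by rw [innQ]; norm_num) (by rw [innQ]; norm_num)
      (by rw [innQ]; norm_num)
  · show InnerProductGeometry.angle (A -ᵥ B) (C -ᵥ B) = 2 * Real.pi / 3
    rw [vsub_eq_sub, vsub_eq_sub, hAB, hCB,
      InnerProductGeometry.angle_smul_left_of_pos _ _ hα,
      InnerProductGeometry.angle_smul_right_of_pos _ _ hβ]
    exact ang_aux _ _ (by rw [innQ]; norm_num) (by rw [innQ]; norm_num)
      (by rw [innQ]; norm_num)
  · show InnerProductGeometry.angle (B -ᵥ C) (D -ᵥ C) = 2 * Real.pi / 3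
    rw [vsub_eq_sub, vsub_eq_sub, hBC, hDC,
      InnerProductGeometry.angle_smul_left_of_pos _ _ hβ,
      InnerProductGeometry.angle_smul_right_of_pos _ _ hα]
    exact ang_aux _ _ (by rw [innQ]; norm_num) (by rw [innQ]; norm_num)
      (by rw [innQ]; norm_num)
  · show InnerProductGeometry.angle (C -ᵥ D) (E -ᵥ D) = 2 * Real.pi / 3
    rw [vsub_eq_sub, vsub_eq_sub, hCD, hED,
      InnerProductGeometry.angle_smul_left_of_pos _ _ hα,
      InnerProductGeometry.angle_smul_right_of_pos _ _ hβ]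
    exact ang_aux _ _ (by rw [innQ]; norm_num) (by rw [innQ]; norm_num)
      (by rw [innQ]; norm_num)
  · show InnerProductGeometry.angle (D -ᵥ E) (F -ᵥ E) = 2 * Real.pi / 3
    rw [vsub_eq_sub, vsub_eq_sub, hDE, hFE,
      InnerProductGeometry.angle_smul_left_of_pos _ _ hβ,
      InnerProductGeometry.angle_smul_right_of_pos _ _ hα]
    exact ang_aux _ _ (by rw [innQ]; norm_num) (by rw [innQ]; norm_num)
      (by rw [innQ]; norm_num)
  · show InnerProductGeometry.angle (E -ᵥ F) (A -ᵥ F) = 2 * Real.pi / 3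
    rw [vsub_eq_sub, vsub_eq_sub, hEF, hAF,
      InnerProductGeometry.angle_smul_left_of_pos _ _ hα,
      InnerProductGeometry.angle_smul_right_of_pos _ _ hβ]
    exact ang_aux _ _ (by rw [innQ]; norm_num) (by rw [innQ]; norm_num)
      (by rw [innQ]; norm_num)
  -- parallel sides
  · exact par_aux A B D E (Q 2 0) _ _ hαne (neg_ne_zero.2 hβne) hBA hEDneg
  · exact par_aux B C E F (Q 1 1) _ _ hβne (neg_ne_zero.2 hαne) hCB hFEneg
  · exact par_aux C D F A (Q (-1) 1) _ _ hαne (neg_ne_zero.2 hβne) hDC hAFneg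
  -- distances
  · -- infDist A (line DE) = 1
    have h2β : 1 - 2*(t₁+t₂+t₃) ≠ 0 := by intro h; apply hβne; linarith
    have hz_eq : (1/(1 - 2*(t₁+t₂+t₃))) • (E -ᵥ D) +ᵥ D = Q (-(2*t₂+t₁+1/2)) (t₁+1/2) := by
      rw [hEd, hDd, vsub_eq_sub, vadd_eq_add]; simp only [hQ]
      match_scalars <;> (field_simp [h2β, hrne]; try ring)
    refine infDist_line_aux A D E n₁ hn₁ ?_ ?_ (Q (-(2*t₂+t₁+1/2)) (t₁+1/2)) ?_ ?_
    · right; rw [hAd, hDd, hn₁d, subQ, innQ]; ring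
    · rw [hEd, hDd, hn₁d, subQ, innQ]; ring
    · rw [← hz_eq]; exact smul_vsub_vadd_mem_affineSpan_pair _ _ _
    · rw [hAd]; exact hdistQ _ _ _ _ (by ring)
  · -- infDist B (line EF) = 1
    have h2α : 2*(t₁+t₂+t₃) + 1 ≠ 0 := by intro h; apply hαne; linarith
    have hz_eq : (1/(2*(t₁+t₂+t₃) + 1)) • (F -ᵥ E) +ᵥ E = Q (2*t₃+t₁-1) t₁ := by
      rw [hFd, hEd, vsub_eq_sub, vadd_eq_add]; simp only [hQ]
      match_scalars <;> (field_simp [h2α, hrne]; try ring)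
    refine infDist_line_aux B E F n₃ hn₃ ?_ ?_ (Q (2*t₃+t₁-1) t₁) ?_ ?_
    · left; rw [hBd, hEd, hn₃d, subQ, innQ]; ring
    · rw [hFd, hEd, hn₃d, subQ, innQ]; ring
    · rw [← hz_eq]; exact smul_vsub_vadd_mem_affineSpan_pair _ _ _
    · rw [hBd]; exact hdistQ _ _ _ _ (by ring)
  · -- infDist C (line FA) = 1
    have h2β : 1 - 2*(t₁+t₂+t₃) ≠ 0 := by intro h; apply hβne; linarith
    have hz_eq : (1/(1 - 2*(t₁+t₂+t₃))) • (A -ᵥ F) +ᵥ F = Q (t₃-t₂-1/2) (-(t₂+t₃)-1/2) := by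
      rw [hAd, hFd, vsub_eq_sub, vadd_eq_add]; simp only [hQ]
      match_scalars <;> (field_simp [h2β, hrne]; try ring)
    refine infDist_line_aux C F A n₂ hn₂ ?_ ?_ (Q (t₃-t₂-1/2) (-(t₂+t₃)-1/2)) ?_ ?_
    · right; rw [hCd, hFd, hn₂d, subQ, innQ]; ring
    · rw [hAd, hFd, hn₂d, subQ, innQ]; ring
    · rw [← hz_eq]; exact smul_vsub_vadd_mem_affineSpan_pair _ _ _
    · rw [hCd]; exact hdistQ _ _ _ _ (by ring)
  -- B - A is a multiple of v
  · refine ⟨(2*(t₁+t₂+t₃)+1)/r * ‖v‖⁻¹, ?_⟩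
    rw [hBd, hAd]; simp only [hQ, hu_def]
    match_scalars <;> ring
  -- hull containment
  · intro p hp
    obtain ⟨hub₁, hub₂, hub₃⟩ := hub p hp
    obtain ⟨hlb₁, hlb₂, hlb₃⟩ := hlb p hp
    obtain ⟨px, py, hpQ⟩ : ∃ px py : ℝ, p = Q px py := by
      refine ⟨r * ⟪p, u⟫_ℝ, ⟪p, w⟫_ℝ, ?_⟩
      rw [hQ]
      have hxr : r * ⟪p, u⟫_ℝ / r = ⟪p, u⟫_ℝ := by
        rw [mul_comm, mul_div_assoc, div_self hrne, mul_one]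
      rw [hxr]
      exact hexp0 p
    have hf₁ : ⟪p, n₁⟫_ℝ = py := by
      conv_lhs => rw [hpQ, hn₁d]
      rw [innQ]; ring
    have hf₂ : ⟪p, n₂⟫_ℝ = -px/2 - py/2 := by
      conv_lhs => rw [hpQ, hn₂d]
      rw [innQ]; ring
    have hf₃ : ⟪p, n₃⟫_ℝ = px/2 - py/2 := by
      conv_lhs => rw [hpQ, hn₃d]
      rw [innQ]; ring
    rw [hf₁] at hub₁ hlb₁
    rw [hf₂] at hub₂ hlb₂
    rw [hf₃] at hub₃ hlb₃
    have hy1 : t₁ - 1/2 ≤ py := by linarith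
    have hy2 : py ≤ t₁ + 1/2 := by linarith
    have hxlb1 : -(2*t₂+1) - py ≤ px := by linarith
    have hxlb2 : 2*t₃ - 1 + py ≤ px := by linarith
    have hxub1 : px ≤ 1 - 2*t₂ - py := by linarith
    have hxub2 : px ≤ 2*t₃ + 1 + py := by linarith
    have hAh : A ∈ convexHull ℝ ({A, B, C, D, E, F} : Set (EuclideanSpace ℝ (Fin 2))) :=
      subset_convexHull _ _ (by simp)
    have hBh : B ∈ convexHull ℝ ({A, B, C, D, E, F} : Set (EuclideanSpace ℝ (Fin 2))) :=
      subset_convexHull _ _ (by simp)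
    have hCh : C ∈ convexHull ℝ ({A, B, C, D, E, F} : Set (EuclideanSpace ℝ (Fin 2))) :=
      subset_convexHull _ _ (by simp)
    have hDh : D ∈ convexHull ℝ ({A, B, C, D, E, F} : Set (EuclideanSpace ℝ (Fin 2))) :=
      subset_convexHull _ _ (by simp)
    have hEh : E ∈ convexHull ℝ ({A, B, C, D, E, F} : Set (EuclideanSpace ℝ (Fin 2))) :=
      subset_convexHull _ _ (by simp)
    have hFh : F ∈ convexHull ℝ ({A, B, C, D, E, F} : Set (EuclideanSpace ℝ (Fin 2))) :=
      subset_convexHull _ _ (by simp)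
    have hcvx := convex_convexHull ℝ ({A, B, C, D, E, F} : Set (EuclideanSpace ℝ (Fin 2)))
    have hfinal : ∀ xl xr : ℝ,
        Q xl py ∈ convexHull ℝ ({A, B, C, D, E, F} : Set (EuclideanSpace ℝ (Fin 2))) →
        Q xr py ∈ convexHull ℝ ({A, B, C, D, E, F} : Set (EuclideanSpace ℝ (Fin 2))) →
        xl ≤ px → px ≤ xr →
        p ∈ convexHull ℝ ({A, B, C, D, E, F} : Set (EuclideanSpace ℝ (Fin 2))) := by
      intro xl xr hl hr h1 h2
      rcases eq_or_lt_of_le (le_trans h1 h2) with he | hlt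
      · have h2' : px ≤ xl := by rw [he]; exact h2
        have hxx : px = xl := le_antisymm h2' h1
        rw [hpQ, hxx]; exact hl
      · have hne : xr - xl ≠ 0 := by intro h0; linarith
        have ha' : (0:ℝ) ≤ (xr - px)/(xr - xl) := div_nonneg (by linarith) (by linarith)
        have hb' : (0:ℝ) ≤ (px - xl)/(xr - xl) := div_nonneg (by linarith) (by linarith)
        have hab' : (xr - px)/(xr - xl) + (px - xl)/(xr - xl) = 1 := by
          rw [← add_div, div_eq_iff hne]; ring
        have hcomb := hcvx hl hr ha' hb' hab'
        have heq : ((xr - px)/(xr - xl)) • Q xl py + ((px - xl)/(xr - xl)) • Q xr py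
            = Q px py := by
          rw [smulQ, smulQ, addQ]
          have e1 : (xr - px)/(xr - xl) * xl + (px - xl)/(xr - xl) * xr = px := by
            rw [div_mul_eq_mul_div, div_mul_eq_mul_div, ← add_div, div_eq_iff hne]; ring
          have e2 : (xr - px)/(xr - xl) * py + (px - xl)/(xr - xl) * py = py := by
            rw [div_mul_eq_mul_div, div_mul_eq_mul_div, ← add_div, div_eq_iff hne]; ring
          rw [e1, e2]
        rw [hpQ, ← heq]; exact hcomb
    rcases le_total py (-(t₂+t₃)) with hy | hy
    · -- lower part : L on [A,F], R on [B,C]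
      have haL : (0:ℝ) ≤ (-(t₂+t₃) - py)/(1/2 - (t₁+t₂+t₃)) :=
        div_nonneg (by linarith) hβ.le
      have hbL : (0:ℝ) ≤ (py - (t₁-1/2))/(1/2 - (t₁+t₂+t₃)) :=
        div_nonneg (by linarith) hβ.le
      have habL : (-(t₂+t₃) - py)/(1/2 - (t₁+t₂+t₃)) + (py - (t₁-1/2))/(1/2 - (t₁+t₂+t₃)) = 1 := by
        rw [← add_div, div_eq_iff hβne]; ring
      have hLmem := hcvx hAh hFh haL hbL habL
      have hLeq : ((-(t₂+t₃) - py)/(1/2 - (t₁+t₂+t₃))) • A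
          + ((py - (t₁-1/2))/(1/2 - (t₁+t₂+t₃))) • F = Q (-(2*t₂+1) - py) py := by
        rw [hAd, hFd, smulQ, smulQ, addQ]
        have e1 : (-(t₂+t₃) - py)/(1/2 - (t₁+t₂+t₃)) * (-(2*t₂+t₁+1/2))
            + (py - (t₁-1/2))/(1/2 - (t₁+t₂+t₃)) * (t₃-t₂-1) = -(2*t₂+1) - py := by
          rw [div_mul_eq_mul_div, div_mul_eq_mul_div, ← add_div, div_eq_iff hβne]; ring
        have e2 : (-(t₂+t₃) - py)/(1/2 - (t₁+t₂+t₃)) * (t₁-1/2)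
            + (py - (t₁-1/2))/(1/2 - (t₁+t₂+t₃)) * (-(t₂+t₃)) = py := by
          rw [div_mul_eq_mul_div, div_mul_eq_mul_div, ← add_div, div_eq_iff hβne]; ring
        rw [e1, e2]
      rw [hLeq] at hLmem
      have hRmem := hcvx hBh hCh haL hbL habL
      have hReq : ((-(t₂+t₃) - py)/(1/2 - (t₁+t₂+t₃))) • B
          + ((py - (t₁-1/2))/(1/2 - (t₁+t₂+t₃))) • C = Q (2*t₃+1+py) py := by
        rw [hBd, hCd, smulQ, smulQ, addQ]
        have e1 : (-(t₂+t₃) - py)/(1/2 - (t₁+t₂+t₃)) * (2*t₃+t₁+1/2)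
            + (py - (t₁-1/2))/(1/2 - (t₁+t₂+t₃)) * (t₃-t₂+1) = 2*t₃+1+py := by
          rw [div_mul_eq_mul_div, div_mul_eq_mul_div, ← add_div, div_eq_iff hβne]; ring
        have e2 : (-(t₂+t₃) - py)/(1/2 - (t₁+t₂+t₃)) * (t₁-1/2)
            + (py - (t₁-1/2))/(1/2 - (t₁+t₂+t₃)) * (-(t₂+t₃)) = py := by
          rw [div_mul_eq_mul_div, div_mul_eq_mul_div, ← add_div, div_eq_iff hβne]; ring
        rw [e1, e2]
      rw [hReq] at hRmem
      exact hfinal _ _ hLmem hRmem (by linarith) (by linarith)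
    · -- upper part : L on [F,E], R on [C,D]
      have haU : (0:ℝ) ≤ ((t₁+1/2) - py)/(t₁+t₂+t₃+1/2) :=
        div_nonneg (by linarith) hα.le
      have hbU : (0:ℝ) ≤ (py + (t₂+t₃))/(t₁+t₂+t₃+1/2) :=
        div_nonneg (by linarith) hα.le
      have habU : ((t₁+1/2) - py)/(t₁+t₂+t₃+1/2) + (py + (t₂+t₃))/(t₁+t₂+t₃+1/2) = 1 := by
        rw [← add_div, div_eq_iff hαne]; ring
      have hLmem := hcvx hFh hEh haU hbU habU
      have hLeq : (((t₁+1/2) - py)/(t₁+t₂+t₃+1/2)) • F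
          + ((py + (t₂+t₃))/(t₁+t₂+t₃+1/2)) • E = Q (2*t₃-1+py) py := by
        rw [hFd, hEd, smulQ, smulQ, addQ]
        have e1 : ((t₁+1/2) - py)/(t₁+t₂+t₃+1/2) * (t₃-t₂-1)
            + (py + (t₂+t₃))/(t₁+t₂+t₃+1/2) * (2*t₃+t₁-1/2) = 2*t₃-1+py := by
          rw [div_mul_eq_mul_div, div_mul_eq_mul_div, ← add_div, div_eq_iff hαne]; ring
        have e2 : ((t₁+1/2) - py)/(t₁+t₂+t₃+1/2) * (-(t₂+t₃))
            + (py + (t₂+t₃))/(t₁+t₂+t₃+1/2) * (t₁+1/2) = py := by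
          rw [div_mul_eq_mul_div, div_mul_eq_mul_div, ← add_div, div_eq_iff hαne]; ring
        rw [e1, e2]
      rw [hLeq] at hLmem
      have hRmem := hcvx hCh hDh haU hbU habU
      have hReq : (((t₁+1/2) - py)/(t₁+t₂+t₃+1/2)) • C
          + ((py + (t₂+t₃))/(t₁+t₂+t₃+1/2)) • D = Q (1-2*t₂-py) py := by
        rw [hCd, hDd, smulQ, smulQ, addQ]
        have e1 : ((t₁+1/2) - py)/(t₁+t₂+t₃+1/2) * (t₃-t₂+1)
            + (py + (t₂+t₃))/(t₁+t₂+t₃+1/2) * (-(2*t₂+t₁-1/2)) = 1-2*t₂-py := by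
          rw [div_mul_eq_mul_div, div_mul_eq_mul_div, ← add_div, div_eq_iff hαne]; ring
        have e2 : ((t₁+1/2) - py)/(t₁+t₂+t₃+1/2) * (-(t₂+t₃))
            + (py + (t₂+t₃))/(t₁+t₂+t₃+1/2) * (t₁+1/2) = py := by
          rw [div_mul_eq_mul_div, div_mul_eq_mul_div, ← add_div, div_eq_iff hαne]; ring
        rw [e1, e2]
      rw [hReq] at hRmem
      exact hfinal _ _ hLmem hRmem (by linarith) (by linarith)
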